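/- Let G be a finite group whose order is square-free (no prime squared divides |G|). Then G is solvable. -/

import Mathlib

universe u

private theorem squarefree_aux : ∀ n : ℕ, ∀ (G : Type u) [Group G] [Finite G],
    Nat.card G = n → Squarefree n → IsSolvable G := by
  intro n
  induction n using Nat.strong_induction_on with
  | _ n ih =>
    intro G _ _ hcard hsq
    rcases eq_or_ne n 1 with rfl | hn1
    · have : Subsingleton G := (Nat.card_eq_one_iff_unique.mp hcard).1
      exact (inferInstance : Group.IsSolvable G)
    · have hn0 : n ≠ 0 := hsq.ne_zero
      set p := n.minFac with hpdef
      have hp : p.Prime := Nat.minFac_prime hn1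
      have hfp : Fact p.Prime := ⟨hp⟩
      have hpn : p ∣ n := n.minFac_dvd
      let P : Sylow p G := default
      -- the Sylow p-subgroup has order exactly p
      have hfact : (Nat.card G).factorization p = 1 := by
        rw [hcard]
        exact Nat.factorization_eq_one_of_squarefree hsq hp hpn
      have hPcard : Nat.card P = p := by
        have h := Sylow.card_eq_multiplicity P
        rw [hfact, pow_one] at h
        exact h
      have hPcyc : IsCyclic P := isCyclic_of_prime_card hPcard
      -- normalizer of P is contained in centralizer of P
      have hNC : Subgroup.normalizer ((P : Subgroup G) : Set G) ≤ Subgroup.centralizer (P : Set G) := by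
        set f := (P : Subgroup G).normalizerMonoidHom with hf
        have hd1 : Nat.card f.range ∣ p - 1 := by
          have h1 : Nat.card (MulAut P) = (p : ℕ).totient := by
            rw [IsCyclic.card_mulAut, hPcard]
          have h2 : Nat.card f.range ∣ Nat.card (MulAut P) :=
            Subgroup.card_subgroup_dvd_card f.range
          rwa [h1, Nat.totient_prime hp] at h2
        have hd2 : Nat.card f.range ∣ n := by
          have h3 : Nat.card f.range ∣ Nat.card (Subgroup.normalizer ((P : Subgroup G) : Set G)) :=
            Subgroup.card_dvd_of_surjective f.rangeRestrict f.rangeRestrict_surjective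
          exact h3.trans (hcard ▸ Subgroup.card_subgroup_dvd_card _)
        have hd : Nat.card f.range = 1 := by
          by_contra hne
          have hq : (Nat.card f.range).minFac.Prime := Nat.minFac_prime hne
          have hq1 : (Nat.card f.range).minFac ∣ p - 1 :=
            (Nat.card f.range).minFac_dvd.trans hd1
          have hq2 : (Nat.card f.range).minFac ∣ n :=
            (Nat.card f.range).minFac_dvd.trans hd2
          have hle : p ≤ (Nat.card f.range).minFac :=
            Nat.minFac_le_of_dvd hq.two_le hq2
          have hlt : (Nat.card f.range).minFac ≤ p - 1 :=
            Nat.le_of_dvd (Nat.sub_pos_of_lt hp.one_lt) hq1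
          have := hp.two_le
          omega
        have hrange : f.range = ⊥ := Subgroup.eq_bot_of_card_eq _ hd
        have hker : f.ker = ⊤ := by
          rw [eq_top_iff]
          intro x _
          have : f x ∈ f.range := ⟨x, rfl⟩
          rw [hrange, Subgroup.mem_bot] at this
          exact this
        rw [Subgroup.normalizerMonoidHom_ker] at hker
        exact (Subgroup.subgroupOf_eq_top).mp hker
      -- Burnside's normal p-complement
      have hcompl := MonoidHom.ker_transferSylow_isComplement' P hNC
      set N := (MonoidHom.transferSylow P hNC).ker with hN
      have hmul : Nat.card N * Nat.card P = n := by
        rw [← hcard]; exact hcompl.card_mul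
      have hNcard : Nat.card N * p = n := by rwa [hPcard] at hmul
      have hNdvd : Nat.card N ∣ n := ⟨p, hNcard.symm⟩
      have hNlt : Nat.card N < n := by
        have h1 : 1 < p := hp.one_lt
        have h2 : 0 < Nat.card N := Nat.card_pos
        nlinarith [hNcard]
      have hNsolv : IsSolvable N :=
        ih (Nat.card N) hNlt N rfl (hsq.squarefree_of_dvd hNdvd)
      have hQcard : Nat.card (G ⧸ N) = p := by
        rw [← Subgroup.index_eq_card, hcompl.symm.index_eq_card, hPcard]
      have hQcyc : IsCyclic (G ⧸ N) := isCyclic_of_prime_card hQcard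
      have hQsolv : IsSolvable (G ⧸ N) := by
        letI hc : CommGroup (G ⧸ N) := @IsCyclic.commGroup _ _ hQcyc
        exact isSolvable_of_comm fun a b => hc.mul_comm a b
      haveI : Group.IsSolvable N := hNsolv
      haveI : Group.IsSolvable (G ⧸ N) := hQsolv
      exact solvable_of_ker_le_range N.subtype (QuotientGroup.mk' N)
        (by rw [QuotientGroup.ker_mk', Subgroup.range_subtype])

/-- A finite group of square-free order is solvable. -/
theorem squarefree_order_isSolvable (G : Type*) [Group G] [Fintype G]
    (h : Squarefree (Fintype.card G)) : IsSolvable G := by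
  exact squarefree_aux (Fintype.card G) G Nat.card_eq_fintype_card h
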